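/- Let e ≥ 1 and a,b ∈ ℕ with 1 ≤ a ≤ q-2 and 0 ≤ b - ea ≤ q-2. Then the minimum distance d^⊥ of the dual code C_{A,e}(a,b)^⊥ satisfies min{a, b-ea} + 2 ≤ d^⊥ ≤ min{a, b} + 2. -/

import Mathlib

noncomputable def dualCode (F : Type*) [Field F] {ι : Type*} [Fintype ι]
    (C : Submodule F (ι → F)) : Submodule F (ι → F) where
  carrier := {x | ∀ c ∈ C, ∑ i, x i * c i = 0}
  zero_mem' := by intro c _; simp
  add_mem' := by
    intro x y hx hy c hc
    simp only [Pi.add_apply, add_mul, Finset.sum_add_distrib]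
    rw [hx c hc, hy c hc, add_zero]
  smul_mem' := by
    intro a x hx c hc
    simp only [Pi.smul_apply, smul_eq_mul, mul_assoc, ← Finset.mul_sum]
    rw [hx c hc, mul_zero]

noncomputable def minDist (F : Type*) [Field F] {ι : Type*} [Fintype ι] [DecidableEq F]
    (C : Submodule F (ι → F)) : ℕ :=
  sInf {w | ∃ c ∈ C, c ≠ 0 ∧ hammingNorm c = w}

/-- The weight of a matrix codeword: the number of nonzero entries. -/
noncomputable def wt2 {F : Type*} [Zero F] [DecidableEq F] {ι₁ ι₂ : Type*} [Fintype ι₁]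
    [Fintype ι₂] (m : ι₂ → ι₁ → F) : ℕ :=
  hammingNorm (fun p : ι₂ × ι₁ => m p.1 p.2)

noncomputable def minDist2 (F : Type*) [Field F] [DecidableEq F] {ι₁ ι₂ : Type*} [Fintype ι₁]
    [Fintype ι₂] (C : Submodule F (ι₂ → ι₁ → F)) : ℕ :=
  sInf {w | ∃ m ∈ C, m ≠ 0 ∧ wt2 m = w}

noncomputable def dualCode2 (F : Type*) [Field F] {ι₁ ι₂ : Type*} [Fintype ι₁] [Fintype ι₂]
    (C : Submodule F (ι₂ → ι₁ → F)) : Submodule F (ι₂ → ι₁ → F) where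
  carrier := {x | ∀ c ∈ C, ∑ i, ∑ j, x i j * c i j = 0}
  zero_mem' := by intro c _; simp
  add_mem' := by
    intro x y hx hy c hc
    simp only [Pi.add_apply, add_mul, Finset.sum_add_distrib]
    rw [hx c hc, hy c hc, add_zero]
  smul_mem' := by
    intro a x hx c hc
    simp only [Pi.smul_apply, smul_eq_mul, mul_assoc, ← Finset.mul_sum]
    rw [hx c hc, mul_zero]

/-- The affine Reed–Solomon code `RS_q(k)`: evaluations of polynomials of degree `< k` at
all elements of `F`.  By convention it is `{0}` for `k ≤ 0` and the full space for `k ≥ q`. -/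
noncomputable def RS (F : Type*) [Field F] (k : ℤ) : Submodule F (F → F) :=
  (Polynomial.degreeLT F k.toNat).map
    (LinearMap.pi fun α : F => (Polynomial.aeval α).toLinearMap)

/-- The linear map `c ↦ v ⊗ c`, sending a word `c` to the matrix `(v i * c j)_{i,j}`. -/
noncomputable def vTensor (F : Type*) [Field F] {ι₁ ι₂ : Type*} (v : ι₁ → F) :
    (ι₂ → F) →ₗ[F] (ι₁ → ι₂ → F) where
  toFun c := fun i j => v i * c j
  map_add' c d := by funext i j; simp [mul_add]
  map_smul' a c := by funext i j; simp only [Pi.smul_apply, smul_eq_mul, RingHom.id_apply]; ring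

/-- The code `C_{𝔸,e}(a,b) = Σ_{d=0}^{a} ⟨(α^d)_α⟩ ⊗ RS_q(b - ed + 1) ⊆ F^{q²}`,
the evaluation code on the affine chart of the Hirzebruch surface `H_e`.  A codeword is a
matrix indexed by `F × F`, the entry at `(α, β)` being `α^d · f(β)`. -/
noncomputable def CA (F : Type*) [Field F] (e a b : ℕ) : Submodule F (F → F → F) :=
  ⨆ d ∈ Finset.Iic a, (RS F ((b : ℤ) - e * d + 1)).map (vTensor F fun α : F => α ^ d)

open Polynomial in
/-- A pure tensor `α^d ⊗ f(β)` with `d ≤ a` and `deg f ≤ b - ed` lies in `C_{𝔸,e}(a,b)`. -/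
lemma tensor_mem_CA (F : Type*) [Field F] (e a b : ℕ) (hb : e * a ≤ b)
    (d : ℕ) (hd : d ≤ a) (f : Polynomial F) (hf : f.natDegree ≤ b - e * d) :
    (fun α β : F => α ^ d * f.eval β) ∈ CA F e a b := by
  have hed : e * d ≤ b := le_trans (Nat.mul_le_mul_left e hd) hb
  have htoNat : ((b : ℤ) - e * d + 1).toNat = b - e * d + 1 := by omega
  have hmem : (fun β : F => f.eval β) ∈ RS F ((b : ℤ) - e * d + 1) := by
    refine ⟨f, ?_, ?_⟩
    · rw [SetLike.mem_coe, Polynomial.mem_degreeLT, htoNat]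
      calc f.degree ≤ (f.natDegree : WithBot ℕ) := degree_le_natDegree
        _ < ((b - e * d + 1 : ℕ) : WithBot ℕ) := by
            exact_mod_cast Nat.lt_succ_of_le hf
    · funext β
      simp [LinearMap.pi_apply, coe_aeval_eq_eval]
  have : (vTensor F fun α : F => α ^ d) (fun β : F => f.eval β) ∈
      (RS F ((b : ℤ) - e * d + 1)).map (vTensor F fun α : F => α ^ d) :=
    Submodule.mem_map_of_mem hmem
  have h2 : (fun α β : F => α ^ d * f.eval β) ∈
      (RS F ((b : ℤ) - e * d + 1)).map (vTensor F fun α : F => α ^ d) := this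
  exact Submodule.mem_iSup_of_mem d
    (Submodule.mem_iSup_of_mem (Finset.mem_Iic.mpr hd) h2)

open Polynomial in
/-- A pure tensor `P(α)·Q(β)` with `deg P ≤ a` and `deg Q ≤ b - ea` lies in `C_{𝔸,e}(a,b)`. -/
lemma tensor_poly_mem_CA (F : Type*) [Field F] (e a b : ℕ) (hb : e * a ≤ b)
    (P Q : Polynomial F) (hP : P.natDegree ≤ a) (hQ : Q.natDegree ≤ b - e * a) :
    (fun α β : F => P.eval α * Q.eval β) ∈ CA F e a b := by
  have hrw : (fun α β : F => P.eval α * Q.eval β)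
      = ∑ d ∈ Finset.range (a + 1), P.coeff d • (fun α β : F => α ^ d * Q.eval β) := by
    funext α β
    rw [Finset.sum_apply, Finset.sum_apply]
    simp only [Pi.smul_apply, smul_eq_mul]
    rw [Polynomial.eval_eq_sum_range' (Nat.lt_succ_of_le hP), Finset.sum_mul]
    exact Finset.sum_congr rfl fun d _ => by ring
  rw [hrw]
  refine Submodule.sum_mem _ fun d hd => Submodule.smul_mem _ _ ?_
  have hda : d ≤ a := Nat.lt_succ_iff.mp (Finset.mem_range.mp hd)
  exact tensor_mem_CA F e a b hb d hda Q
    (hQ.trans (Nat.sub_le_sub_left (Nat.mul_le_mul_left e hda) b))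

/-- On a large enough field there is a nonzero vector of support `≤ n + 2` orthogonal to
all power functions `α ↦ α^d` with `d ≤ n`. -/
lemma exists_dual_vec (F : Type*) [Field F] [Fintype F] [DecidableEq F] (n : ℕ)
    (hn : n + 2 ≤ Fintype.card F) :
    ∃ (S : Finset F) (x : F → F), S.card = n + 2 ∧ x ≠ 0 ∧ (∀ α ∉ S, x α = 0) ∧
      ∀ d ≤ n, ∑ α, x α * α ^ d = 0 := by
  obtain ⟨S, -, hScard⟩ :=
    Finset.exists_subset_card_eq (s := (Finset.univ : Finset F)) (n := n + 2)
      (by simpa using hn)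
  let L : (S → F) →ₗ[F] (Fin (n + 1) → F) :=
    { toFun := fun y d => ∑ s : S, y s * (s : F) ^ (d : ℕ)
      map_add' := by
        intro y z; funext d
        simp [add_mul, Finset.sum_add_distrib]
      map_smul' := by
        intro c y; funext d
        simp [Finset.mul_sum, mul_assoc] }
  have hni : ¬ Function.Injective L := by
    intro h
    have hle := LinearMap.finrank_le_finrank_of_injective h
    rw [Module.finrank_pi, Module.finrank_pi] at hle
    simp only [Fintype.card_coe, Fintype.card_fin, hScard] at hle
    omega
  obtain ⟨y, z, hyz, hne⟩ := Function.not_injective_iff.mp hni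
  refine ⟨S, fun α => if h : α ∈ S then (y - z) ⟨α, h⟩ else 0, hScard, ?_, ?_, ?_⟩
  · intro h0
    apply hne
    have : y - z = 0 := by
      funext s
      have := congrFun h0 (s : F)
      simpa [s.2] using this
    have := sub_eq_zero.mp this
    exact this
  · intro α hα; simp [hα]
  · intro d hd
    have key : L (y - z) = 0 := by rw [map_sub, hyz, sub_self]
    have keyd := congrFun key ⟨d, Nat.lt_succ_of_le hd⟩
    have hres : ∑ α ∈ S, (if h : α ∈ S then (y - z) ⟨α, h⟩ else 0) * α ^ d
        = ∑ s : S, (y - z) s * (s : F) ^ d := by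
      rw [← Finset.sum_coe_sort S]
      exact Finset.sum_congr rfl fun s _ => by rw [dif_pos s.2]
    rw [← Finset.sum_subset (Finset.subset_univ S)
      (fun α _ hα => by simp [dif_neg hα]), hres]
    exact keyd
  
/-- Membership in the dual code, unfolded. -/
lemma mem_dualCode2 (F : Type*) [Field F] {ι₁ ι₂ : Type*} [Fintype ι₁] [Fintype ι₂]
    {C : Submodule F (ι₂ → ι₁ → F)} {x : ι₂ → ι₁ → F} :
    x ∈ dualCode2 F C ↔ ∀ c ∈ C, ∑ i, ∑ j, x i j * c i j = 0 := Iff.rfl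

/-- The pairing against a fixed `x`, as a linear map. -/
noncomputable def pairingL (F : Type*) [Field F] {ι₁ ι₂ : Type*} [Fintype ι₁] [Fintype ι₂]
    (x : ι₂ → ι₁ → F) : (ι₂ → ι₁ → F) →ₗ[F] F where
  toFun c := ∑ i, ∑ j, x i j * c i j
  map_add' c d := by
    simp only [Pi.add_apply, mul_add, Finset.sum_add_distrib]
  map_smul' a c := by
    simp only [Pi.smul_apply, smul_eq_mul, RingHom.id_apply, Finset.mul_sum]
    exact Finset.sum_congr rfl fun i _ => Finset.sum_congr rfl fun j _ => by ring

open Polynomial in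
/-- A sufficient condition for membership in the dual of `C_{𝔸,e}(a,b)`. -/
lemma mem_dual_CA_of (F : Type*) [Field F] [Fintype F] (e a b : ℕ) (x : F → F → F)
    (h : ∀ d ≤ a, ∀ f ∈ Polynomial.degreeLT F ((b : ℤ) - e * d + 1).toNat,
      ∑ α : F, ∑ β : F, x α β * (α ^ d * f.eval β) = 0) :
    x ∈ dualCode2 F (CA F e a b) := by
  rw [mem_dualCode2]
  have hker : CA F e a b ≤ LinearMap.ker (pairingL F x) := by
    refine iSup₂_le fun d hd => ?_
    rw [Submodule.map_le_iff_le_comap]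
    rintro w ⟨f, hf, rfl⟩
    rw [SetLike.mem_coe] at hf
    simp only [Submodule.mem_comap, LinearMap.mem_ker]
    have : pairingL F x ((vTensor F fun α : F => α ^ d)
        ((LinearMap.pi fun α : F => (Polynomial.aeval α).toLinearMap) f))
        = ∑ α : F, ∑ β : F, x α β * (α ^ d * f.eval β) := by
      simp [pairingL, vTensor, LinearMap.pi_apply, coe_aeval_eq_eval]
    rw [this]
    exact h d (Finset.mem_Iic.mp hd) f hf
  intro c hc
  exact hker hc

open Polynomial in
set_option maxHeartbeats 2000000 in
/-- Any dual codeword of weight at most `min a (b - ea) + 1` is zero. -/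
lemma dual_CA_eq_zero_of_wt_le (F : Type*) [Field F] [Fintype F] [DecidableEq F]
    (e a b : ℕ) (hb1 : e * a ≤ b) (x : F → F → F) (hx : x ∈ dualCode2 F (CA F e a b))
    (hwt : wt2 x ≤ min a (b - e * a) + 1) : x = 0 := by
  by_contra hx0
  obtain ⟨α₀, hα⟩ : ∃ α, x α ≠ 0 := by
    by_contra h; push_neg at h; exact hx0 (funext fun α => h α)
  obtain ⟨β₀, hβ⟩ : ∃ β, x α₀ β ≠ 0 := by
    by_contra h; push_neg at h; exact hα (funext fun β => h β)
  set p₀ : F × F := (α₀, β₀) with hp₀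
  set T : Finset (F × F) := Finset.univ.filter (fun p => x p.1 p.2 ≠ 0) with hT
  have hp₀T : p₀ ∈ T := by simp [hT, hp₀, hβ]
  have hTcard : T.card = wt2 x := by
    unfold wt2 hammingNorm
    congr 1
  set E := T.erase p₀ with hE
  have hEcard : E.card ≤ min a (b - e * a) := by
    have h1 : E.card = T.card - 1 := Finset.card_erase_of_mem hp₀T
    omega
  set A := E.filter (fun q => q.1 ≠ α₀) with hA
  set B := E.filter (fun q => ¬ q.1 ≠ α₀) with hB
  have hABcard : A.card + B.card = E.card :=
    Finset.card_filter_add_card_filter_not _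
  set P := ∏ q ∈ A, (Polynomial.X - Polynomial.C q.1) with hP
  set Q := ∏ q ∈ B, (Polynomial.X - Polynomial.C q.2) with hQ
  have hPdeg : P.natDegree ≤ A.card := by
    rw [hP]
    refine le_trans (Polynomial.natDegree_prod_le _ _) ?_
    simp [Polynomial.natDegree_X_sub_C]
  have hQdeg : Q.natDegree ≤ B.card := by
    rw [hQ]
    refine le_trans (Polynomial.natDegree_prod_le _ _) ?_
    simp [Polynomial.natDegree_X_sub_C]
  have hAE : A.card ≤ E.card := Finset.card_filter_le _ _
  have hBE : B.card ≤ E.card := Finset.card_filter_le _ _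
  have hcw : (fun α β : F => P.eval α * Q.eval β) ∈ CA F e a b :=
    tensor_poly_mem_CA F e a b hb1 P Q (hPdeg.trans (by omega))
      (hQdeg.trans (by omega))
  have h0 : ∑ α : F, ∑ β : F, x α β * (P.eval α * Q.eval β) = 0 :=
    (Iff.mp (mem_dualCode2 F) hx) _ hcw
  have h0' : ∑ p : F × F, x p.1 p.2 * (P.eval p.1 * Q.eval p.2) = 0 := by
    rw [Fintype.sum_prod_type]; exact h0
  rw [← Finset.sum_subset (Finset.subset_univ T) (fun p _ hp => by
      have hxp : ¬ x p.1 p.2 ≠ 0 := by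
        intro hne; exact hp (by simp [hT, hne])
      rw [not_not.mp hxp, zero_mul])] at h0'
  rw [← Finset.insert_erase hp₀T, Finset.sum_insert (Finset.notMem_erase _ _)] at h0'
  have hEzero : ∑ p ∈ T.erase p₀, x p.1 p.2 * (P.eval p.1 * Q.eval p.2) = 0 := by
    refine Finset.sum_eq_zero fun q hq => ?_
    by_cases hq1 : q.1 ≠ α₀
    · have hqA : q ∈ A := Finset.mem_filter.mpr ⟨hq, hq1⟩
      have hz : P.eval q.1 = 0 := by
        rw [hP, Polynomial.eval_prod]
        exact Finset.prod_eq_zero hqA (by simp)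
      rw [hz]; ring
    · have hqB : q ∈ B := Finset.mem_filter.mpr ⟨hq, hq1⟩
      have hz : Q.eval q.2 = 0 := by
        rw [hQ, Polynomial.eval_prod]
        exact Finset.prod_eq_zero hqB (by simp)
      rw [hz]; ring
  rw [hEzero, add_zero] at h0'
  have hPne : P.eval α₀ ≠ 0 := by
    rw [hP, Polynomial.eval_prod]
    refine Finset.prod_ne_zero_iff.mpr fun q hq => ?_
    have hne := (Finset.mem_filter.mp hq).2
    simp only [Polynomial.eval_sub, Polynomial.eval_X, Polynomial.eval_C]
    exact sub_ne_zero.mpr (Ne.symm hne)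
  have hQne : Q.eval β₀ ≠ 0 := by
    rw [hQ, Polynomial.eval_prod]
    refine Finset.prod_ne_zero_iff.mpr fun q hq => ?_
    obtain ⟨hqE, hq1⟩ := Finset.mem_filter.mp hq
    push_neg at hq1
    have hqne : q ≠ p₀ := Finset.ne_of_mem_erase hqE
    have h2 : q.2 ≠ β₀ := fun h2 => hqne (Prod.ext hq1 h2)
    simp only [Polynomial.eval_sub, Polynomial.eval_X, Polynomial.eval_C]
    exact sub_ne_zero.mpr (Ne.symm h2)
  exact (mul_ne_zero hβ (mul_ne_zero hPne hQne)) h0'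

/-- for `e ≥ 1`, `1 ≤ a ≤ q-2` and `0 ≤ b - ea ≤ q-2`, the minimum distance
`d^⊥` of `C_{𝔸,e}(a,b)^⊥` satisfies `min{a, b-ea} + 2 ≤ d^⊥ ≤ min{a, b} + 2`. -/
theorem CA_dual_minDist (F : Type*) [Field F] [Fintype F] [DecidableEq F] (q e a b : ℕ)
    (hq : Fintype.card F = q) (he : 1 ≤ e) (ha1 : 1 ≤ a) (ha2 : a ≤ q - 2)
    (hb1 : e * a ≤ b) (hb2 : b - e * a ≤ q - 2) :
    min a (b - e * a) + 2 ≤ minDist2 F (dualCode2 F (CA F e a b)) ∧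
      minDist2 F (dualCode2 F (CA F e a b)) ≤ min a b + 2 := by
  have hq3 : 3 ≤ q := by omega
  -- a witness dual codeword of small weight
  have hwitness : ∃ x ∈ dualCode2 F (CA F e a b), x ≠ 0 ∧ wt2 x ≤ min a b + 2 := by
    rcases le_or_gt a b with hab | hba
    · -- vertical line: weight ≤ a + 2
      obtain ⟨S, y, hS, hy0, hysupp, hysum⟩ := exists_dual_vec F a (by omega)
      refine ⟨(fun α β : F => if β = 0 then y α else 0), ?_, ?_, ?_⟩
      · apply mem_dual_CA_of
        intro d hd f _
        have hinner : ∀ α : F, ∑ β : F, (if β = 0 then y α else 0) * (α ^ d * f.eval β)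
            = y α * α ^ d * f.eval 0 := by
          intro α
          simp only [ite_mul, zero_mul]
          rw [Finset.sum_ite_eq' Finset.univ (0 : F)
            (fun β => y α * (α ^ d * f.eval β))]
          simp [mul_assoc]
        simp only [hinner]
        calc ∑ α : F, y α * α ^ d * f.eval 0
            = (∑ α : F, y α * α ^ d) * f.eval 0 := by rw [Finset.sum_mul]
          _ = 0 := by rw [hysum d hd, zero_mul]
      · intro h0
        apply hy0
        funext α
        have := congrFun (congrFun h0 α) 0
        simpa using this
      · have hle : wt2 (fun α β : F => if β = 0 then y α else 0)
            ≤ (S ×ˢ ({0} : Finset F)).card := by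
          unfold wt2 hammingNorm
          refine Finset.card_le_card ?_
          intro p hp
          simp only [Finset.mem_filter, Finset.mem_univ, true_and] at hp
          have hp2 : p.2 = 0 := by
            by_contra h2; exact hp (by simp [h2])
          have hp1 : p.1 ∈ S := by
            by_contra h1
            exact hp (by simp [hp2, hysupp p.1 h1])
          simp only [Finset.mem_product, Finset.mem_singleton]
          exact ⟨hp1, hp2⟩
        rw [Finset.card_product, hS] at hle
        simp only [Finset.card_singleton, mul_one] at hle
        omega
    · -- horizontal line: weight ≤ b + 2
      obtain ⟨S, y, hS, hy0, hysupp, hysum⟩ := exists_dual_vec F b (by omega)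
      refine ⟨(fun α β : F => if α = 1 then y β else 0), ?_, ?_, ?_⟩
      · apply mem_dual_CA_of
        intro d hd f hf
        have hed : e * d ≤ b := le_trans (Nat.mul_le_mul_left e hd) hb1
        have hdeg : f.natDegree < b + 1 := by
          rcases eq_or_ne f 0 with rfl | hfne
          · simp
          · have h1 := Polynomial.mem_degreeLT.mp hf
            have h2 : f.degree < ((b + 1 : ℕ) : WithBot ℕ) := by
              refine lt_of_lt_of_le h1 ?_
              have : ((b : ℤ) - e * d + 1).toNat ≤ b + 1 := by omega
              exact_mod_cast this
            exact (Polynomial.natDegree_lt_iff_degree_lt hfne).mpr h2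
        have houter : ∀ α : F, ∑ β : F, (if α = 1 then y β else 0) * (α ^ d * f.eval β)
            = if α = 1 then ∑ β : F, y β * ((1 : F) ^ d * f.eval β) else 0 := by
          intro α
          by_cases h : α = 1 <;> simp [h]
        simp only [houter]
        rw [Finset.sum_ite_eq' Finset.univ (1 : F)
          (fun _ => ∑ β : F, y β * ((1 : F) ^ d * f.eval β))]
        simp only [Finset.mem_univ, if_true]
        calc ∑ β : F, y β * ((1 : F) ^ d * f.eval β)
            = ∑ β : F, ∑ j ∈ Finset.range (b + 1), f.coeff j * (y β * β ^ j) := by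
              refine Finset.sum_congr rfl fun β _ => ?_
              rw [one_pow, one_mul, Polynomial.eval_eq_sum_range' hdeg, Finset.mul_sum]
              exact Finset.sum_congr rfl fun j _ => by ring
          _ = ∑ j ∈ Finset.range (b + 1), f.coeff j * ∑ β : F, y β * β ^ j := by
              rw [Finset.sum_comm]
              exact Finset.sum_congr rfl fun j _ => by rw [Finset.mul_sum]
          _ = 0 := Finset.sum_eq_zero fun j hj => by
              rw [hysum j (Nat.lt_succ_iff.mp (Finset.mem_range.mp hj)), mul_zero]
      · intro h0
        apply hy0
        funext β
        have := congrFun (congrFun h0 1) β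
        simpa using this
      · have hle : wt2 (fun α β : F => if α = 1 then y β else 0)
            ≤ (({1} : Finset F) ×ˢ S).card := by
          unfold wt2 hammingNorm
          refine Finset.card_le_card ?_
          intro p hp
          simp only [Finset.mem_filter, Finset.mem_univ, true_and] at hp
          have hp1 : p.1 = 1 := by
            by_contra h1; exact hp (by simp [h1])
          have hp2 : p.2 ∈ S := by
            by_contra h2
            exact hp (by simp [hp1, hysupp p.2 h2])
          simp only [Finset.mem_product, Finset.mem_singleton]
          exact ⟨hp1, hp2⟩
        rw [Finset.card_product, hS] at hle
        simp only [Finset.card_singleton, one_mul] at hle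
        omega
  obtain ⟨xw, hxwmem, hxwne, hxwwt⟩ := hwitness
  have hnonempty : {w | ∃ m ∈ dualCode2 F (CA F e a b), m ≠ 0 ∧ wt2 m = w}.Nonempty :=
    ⟨wt2 xw, xw, hxwmem, hxwne, rfl⟩
  constructor
  · obtain ⟨c, hc, hcne, hcw⟩ := Nat.sInf_mem hnonempty
    show min a (b - e * a) + 2 ≤ sInf _
    by_contra hlt
    push_neg at hlt
    have hcwle : wt2 c ≤ min a (b - e * a) + 1 := by
      rw [hcw]; omega
    exact hcne (dual_CA_eq_zero_of_wt_le F e a b hb1 c hc hcwle)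
  · calc minDist2 F (dualCode2 F (CA F e a b)) ≤ wt2 xw :=
        Nat.sInf_le ⟨xw, hxwmem, hxwne, rfl⟩
      _ ≤ min a b + 2 := hxwwt
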